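/- Let ν ~ TExp(λ, 1) with λ = ln K, K ≥ 3, and let ρ = 1 + ν. For any threshold θ with θ ≤ 2 - 1/λ and δ > 0 with θ + δ ≤ 2: Pr[ρ ∈ [θ, θ+δ) | ρ ≥ θ] ≤ 2δλ. -/

import Mathlib

open MeasureTheory

/-- The truncated exponential distribution `TExp(λ,γ)`: the exponential distribution with
rate `λ` conditioned on being at most `γ`. -/
noncomputable def texp (l g : ℝ) : Measure ℝ :=
  (volume.restrict (Set.Icc (0 : ℝ) g)).withDensity
    (fun x => ENNReal.ofReal ((1 - Real.exp (-(l * g)))⁻¹ * l * Real.exp (-(l * x))))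

lemma texp_apply_aux (l : ℝ) (s : Set ℝ) (hs : MeasurableSet s) :
    texp l 1 s = ∫⁻ x in s ∩ Set.Icc (0:ℝ) 1,
      ENNReal.ofReal ((1 - Real.exp (-(l * 1)))⁻¹ * l * Real.exp (-(l * x))) := by
  rw [texp, withDensity_apply _ hs, Measure.restrict_restrict hs]

lemma texp_Ioc (l p q : ℝ) (hl : 0 < l) (h0 : 0 ≤ p) (hpq : p ≤ q) (hq1 : q ≤ 1) :
    texp l 1 (Set.Ioc p q)
      = ENNReal.ofReal ((1 - Real.exp (-(l * 1)))⁻¹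
          * (Real.exp (-(l * p)) - Real.exp (-(l * q)))) := by
  set c : ℝ := (1 - Real.exp (-(l * 1)))⁻¹ with hc
  have hexp1 : Real.exp (-(l * 1)) ≤ 1 := Real.exp_le_one_iff.mpr (by nlinarith)
  have hc0 : 0 ≤ c := inv_nonneg.mpr (by linarith)
  have hsub : Set.Ioc p q ∩ Set.Icc (0:ℝ) 1 = Set.Ioc p q := by
    apply Set.inter_eq_left.mpr
    intro x hx; exact ⟨le_trans h0 hx.1.le, hx.2.trans hq1⟩
  rw [texp_apply_aux _ _ measurableSet_Ioc, hsub]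
  have hcont : Continuous fun x : ℝ => c * l * Real.exp (-(l * x)) := by
    fun_prop
  have hnn : 0 ≤ᵐ[volume.restrict (Set.Ioc p q)]
      fun x : ℝ => c * l * Real.exp (-(l * x)) := by
    filter_upwards with x
    positivity
  rw [← ofReal_integral_eq_lintegral_ofReal (hcont.integrableOn_Ioc) hnn]
  congr 1
  have hF : ∀ x : ℝ, HasDerivAt (fun y : ℝ => -(c * Real.exp (-(l * y))))
      (c * l * Real.exp (-(l * x))) x := by
    intro x
    have h1 : HasDerivAt (fun y : ℝ => -(l * y)) (-l) x := by
      have h0 := ((hasDerivAt_id x).const_mul l).neg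
      simp only [id, mul_one] at h0
      exact h0
    have h2 := (Real.hasDerivAt_exp (-(l * x))).comp x h1
    have h3 : HasDerivAt (fun y : ℝ => -(c * Real.exp (-(l * y))))
        (-(c * (Real.exp (-(l * x)) * -l))) x := (h2.const_mul c).neg
    convert h3 using 1
    ring
  have := intervalIntegral.integral_eq_sub_of_hasDerivAt
    (f := fun y : ℝ => -(c * Real.exp (-(l * y))))
    (f' := fun x : ℝ => c * l * Real.exp (-(l * x)))
    (a := p) (b := q) (fun x _ => hF x) (hcont.intervalIntegrable p q)
  rw [← intervalIntegral.integral_of_le hpq, this]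
  ring

lemma texp_singleton (l x : ℝ) : texp l 1 {x} = 0 := by
  rw [texp_apply_aux _ _ (measurableSet_singleton x)]
  have : volume ({x} ∩ Set.Icc (0:ℝ) 1) = 0 :=
    measure_mono_null Set.inter_subset_left (measure_singleton x)
  rw [Measure.restrict_eq_zero.mpr this, lintegral_zero_measure]

theorem stmt_8 (K θ δ : ℝ) (hK : 3 ≤ K) (hθ : θ ≤ 2 - 1 / Real.log K)
    (hδ : 0 < δ) (hθδ : θ + δ ≤ 2) :
    (texp (Real.log K) 1).map (fun x => 1 + x) (Set.Ico θ (θ + δ))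
        / (texp (Real.log K) 1).map (fun x => 1 + x) (Set.Ici θ)
      ≤ ENNReal.ofReal (2 * δ * Real.log K) := by
  have hK0 : (0:ℝ) < K := by linarith
  set l := Real.log K with hldef
  have hl1 : 1 ≤ l := by
    rw [hldef, Real.le_log_iff_exp_le (by linarith)]
    have := Real.exp_one_lt_d9
    linarith
  have hl : 0 < l := by linarith
  have hmeas : Measurable fun x : ℝ => 1 + x := measurable_id.const_add 1
  rw [Measure.map_apply hmeas measurableSet_Ico, Measure.map_apply hmeas measurableSet_Ici]
  have hpre1 : (fun x : ℝ => 1 + x) ⁻¹' Set.Ico θ (θ + δ) = Set.Ico (θ - 1) (θ + δ - 1) := by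
    ext x
    simp only [Set.mem_preimage, Set.mem_Ico]
    constructor <;> rintro ⟨h1, h2⟩ <;> constructor <;> linarith
  have hpre2 : (fun x : ℝ => 1 + x) ⁻¹' Set.Ici θ = Set.Ici (θ - 1) := by
    ext x
    simp only [Set.mem_preimage, Set.mem_Ici]
    constructor <;> intro <;> linarith
  rw [hpre1, hpre2]
  set a := θ - 1 with hadef
  set b := θ + δ - 1 with hbdef
  by_cases hb : b ≤ 0
  · have hempty : Set.Ico a b ∩ Set.Icc (0:ℝ) 1 = ∅ := by
      ext x
      simp only [Set.mem_inter_iff, Set.mem_Ico, Set.mem_Icc, Set.mem_empty_iff_false, iff_false]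
      rintro ⟨⟨_, h2⟩, ⟨h3, _⟩⟩
      linarith
    rw [texp_apply_aux _ _ measurableSet_Ico, hempty, Measure.restrict_empty,
      lintegral_zero_measure, ENNReal.zero_div]
    exact zero_le
  · push_neg at hb
    set p := max a 0 with hpdef
    have hab : a < b := by rw [hadef, hbdef]; linarith
    have hp0 : 0 ≤ p := le_max_right a 0
    have hpb : p < b := max_lt hab hb
    have hinvl : 1 / l ≤ 1 := by
      rw [div_le_one hl]; linarith
    have hal : a ≤ 1 - 1 / l := by rw [hadef]; linarith
    have hpl : p ≤ 1 - 1 / l := max_le hal (by linarith)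
    have hp1 : p ≤ 1 := by
      have : (0:ℝ) ≤ 1 / l := by positivity
      linarith
    have hb1 : b ≤ 1 := by rw [hbdef]; linarith
    set c : ℝ := (1 - Real.exp (-(l * 1)))⁻¹ with hc
    -- numerator bound
    have hnum : texp l 1 (Set.Ico a b) ≤ texp l 1 (Set.Ioc p b) := by
      have h1 : texp l 1 (Set.Ico a b) ≤ texp l 1 (Set.Icc p b) := by
        rw [texp_apply_aux _ _ measurableSet_Ico,
          texp_apply_aux _ _ measurableSet_Icc]
        apply lintegral_mono_set
        rintro x ⟨⟨hx1, hx2⟩, ⟨hx3, hx4⟩⟩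
        exact ⟨⟨max_le hx1 hx3, hx2.le⟩, hx3, hx4⟩
      have h2 : texp l 1 (Set.Icc p b) ≤ texp l 1 (Set.Ioc p b) := by
        have hins : Set.Icc p b = {p} ∪ Set.Ioc p b := by
          rw [← Set.Ioc_insert_left hpb.le, Set.insert_eq]
        calc texp l 1 (Set.Icc p b) ≤ texp l 1 {p} + texp l 1 (Set.Ioc p b) := by
              rw [hins]; exact measure_union_le _ _
          _ = texp l 1 (Set.Ioc p b) := by rw [texp_singleton, zero_add]
      exact h1.trans h2
    -- denominator bound
    have hden : texp l 1 (Set.Ioc p 1) ≤ texp l 1 (Set.Ici a) := by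
      apply measure_mono
      intro x hx
      exact le_of_lt (lt_of_le_of_lt (le_max_left a 0) hx.1)
    have key : texp l 1 (Set.Ico a b) / texp l 1 (Set.Ici a)
        ≤ texp l 1 (Set.Ioc p b) / texp l 1 (Set.Ioc p 1) :=
      ENNReal.div_le_div hnum hden
    refine key.trans ?_
    rw [texp_Ioc l p b hl hp0 hpb.le hb1, texp_Ioc l p 1 hl hp0 hp1 le_rfl]
    -- real-number estimates
    have hexp1 : Real.exp (-(l * 1)) ≤ 1 := Real.exp_le_one_iff.mpr (by nlinarith)
    have hE1 : Real.exp (-(l * 1)) < 1 := Real.exp_lt_one_iff.mpr (by nlinarith)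
    have hc0 : 0 < c := inv_pos.mpr (by linarith)
    set Ep := Real.exp (-(l * p)) with hEp
    have hEp0 : 0 < Ep := Real.exp_pos _
    -- e^{-l} ≤ Ep / 2
    have htail : Real.exp (-(l * 1)) ≤ Ep / 2 := by
      have h1 : -(l * 1) = -(l * p) + (-(l * (1 - p))) := by ring
      rw [h1, Real.exp_add]
      have h2 : 1 ≤ l * (1 - p) := by
        have : 1 / l ≤ 1 - p := by linarith
        calc (1:ℝ) = l * (1 / l) := by field_simp
          _ ≤ l * (1 - p) := by apply mul_le_mul_of_nonneg_left this hl.le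
      have h3 : Real.exp (-(l * (1 - p))) ≤ Real.exp (-1) :=
        Real.exp_le_exp.mpr (by linarith)
      have h4 : Real.exp (-1) ≤ 1 / 2 := by
        rw [Real.exp_neg]
        have h5 : (2:ℝ) ≤ Real.exp 1 := by
          have := Real.add_one_le_exp 1
          linarith
        rw [inv_le_comm₀ (Real.exp_pos 1) (by norm_num)] at *
        · linarith [Real.exp_pos 1]
      nlinarith [Real.exp_pos (-(l * (1 - p)))]
    -- Ep - e^{-lb} ≤ l δ Ep
    have hhead : Ep - Real.exp (-(l * b)) ≤ l * δ * Ep := by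
      have h1 : -(l * b) = -(l * p) + (-(l * (b - p))) := by ring
      rw [h1, Real.exp_add]
      have h2 : 1 - l * (b - p) ≤ Real.exp (-(l * (b - p))) := by
        have := Real.add_one_le_exp (-(l * (b - p)))
        linarith
      have h3 : b - p ≤ δ := by
        have : a ≤ p := le_max_left a 0
        rw [hbdef]; rw [hadef] at this; linarith
      rw [← hEp]
      have h4 : Ep * (1 - Real.exp (-(l * (b - p)))) ≤ Ep * (l * (b - p)) :=
        mul_le_mul_of_nonneg_left (by linarith) hEp0.le
      have h5 : Ep * (l * (b - p)) ≤ Ep * (l * δ) :=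
        mul_le_mul_of_nonneg_left (mul_le_mul_of_nonneg_left h3 hl.le) hEp0.le
      nlinarith [h4, h5]
    have hYpos : 0 < Ep - Real.exp (-(l * 1)) := by linarith
    have hden_pos : 0 < c * (Ep - Real.exp (-(l * 1))) := mul_pos hc0 hYpos
    rw [← ENNReal.ofReal_div_of_pos hden_pos]
    apply ENNReal.ofReal_le_ofReal
    rw [mul_div_mul_left _ _ (ne_of_gt hc0)]
    rw [div_le_iff₀ hYpos]
    have h6 : 0 ≤ 2 * δ * l * ((Ep - Real.exp (-(l * 1))) - Ep / 2) :=
      mul_nonneg (by positivity) (by linarith)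
    have h7 : 2 * δ * l * (Ep - Real.exp (-(l * 1)))
        = 2 * δ * l * ((Ep - Real.exp (-(l * 1))) - Ep / 2) + l * δ * Ep := by ring
    linarith [h6, hhead, h7]
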